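/- Let X_1, ..., X_n be independent real-valued random variables with |X_i| ≤ 1 and 𝔼X_i = 0 for all i, and let S = X_1 + ... + X_n. Then for every x > 0, P(S ≥ x) ≤ exp(−x² / (2(𝔼S² + x))). -/

import Mathlib

open MeasureTheory ProbabilityTheory Nat

lemma exp_sub_one_sub_eq_tsum (s : ℝ) :
    Real.exp s - 1 - s = ∑' n : ℕ, s ^ (n + 2) / ((n + 2)! : ℝ) := by
  have hf : Summable fun n : ℕ => s ^ n / (n ! : ℝ) := Real.summable_pow_div_factorial s
  have h1 : Summable fun n : ℕ => s ^ (n + 1) / ((n + 1)! : ℝ) := (summable_nat_add_iff 1).2 hf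
  have e0 : Real.exp s = ∑' n : ℕ, s ^ n / (n ! : ℝ) := by
    rw [Real.exp_eq_exp_ℝ, NormedSpace.exp_eq_tsum_div]
  rw [e0, Summable.tsum_eq_zero_add hf, Summable.tsum_eq_zero_add h1]
  simp [Nat.factorial]

lemma exp_pointwise_bound {t u : ℝ} (ht : 0 ≤ t) (hu : |u| ≤ 1) :
    Real.exp (t * u) ≤ 1 + t * u + u ^ 2 * (Real.exp t - 1 - t) := by
  have key : Real.exp (t * u) - 1 - t * u ≤ u ^ 2 * (Real.exp t - 1 - t) := by
    rw [exp_sub_one_sub_eq_tsum (t * u), exp_sub_one_sub_eq_tsum t, ← tsum_mul_left]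
    refine Summable.tsum_le_tsum (fun n => ?_) ((summable_nat_add_iff 2).2 (Real.summable_pow_div_factorial (t*u))) (((summable_nat_add_iff 2).2 (Real.summable_pow_div_factorial t)).mul_left _)
    have h1 : (t * u) ^ (n + 2) ≤ u ^ 2 * t ^ (n + 2) := by
      have : (t * u) ^ (n + 2) ≤ |(t * u) ^ (n + 2)| := le_abs_self _
      refine this.trans ?_
      rw [abs_pow, abs_mul, abs_of_nonneg ht, mul_pow]
      have hub : |u| ^ (n + 2) ≤ u ^ 2 := by
        calc |u| ^ (n + 2) = |u| ^ n * |u| ^ 2 := by ring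
          _ ≤ 1 * |u| ^ 2 := by
              apply mul_le_mul_of_nonneg_right (pow_le_one₀ (abs_nonneg u) hu) (by positivity)
          _ = u ^ 2 := by rw [one_mul, sq_abs]
      calc t ^ (n + 2) * |u| ^ (n + 2) ≤ t ^ (n + 2) * u ^ 2 :=
            mul_le_mul_of_nonneg_left hub (by positivity)
        _ = u ^ 2 * t ^ (n + 2) := by ring
    rw [← mul_div_assoc]
    exact div_le_div_of_nonneg_right h1 (by positivity)
  linarith

lemma exp_sub_one_sub_le {t : ℝ} (ht : 0 ≤ t) (ht1 : t < 1) :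
    Real.exp t - 1 - t ≤ t ^ 2 / (2 * (1 - t)) := by
  rw [exp_sub_one_sub_eq_tsum t]
  have hgeo : Summable fun n : ℕ => t ^ 2 / 2 * t ^ n :=
    (summable_geometric_of_lt_one ht ht1).mul_left _
  calc ∑' n : ℕ, t ^ (n + 2) / ((n + 2)! : ℝ)
      ≤ ∑' n : ℕ, t ^ 2 / 2 * t ^ n := by
        refine Summable.tsum_le_tsum (fun n => ?_) ((summable_nat_add_iff 2).2 (Real.summable_pow_div_factorial t)) hgeo
        have h2 : (2 : ℝ) ≤ ((n + 2)! : ℝ) := by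
          exact_mod_cast Nat.self_le_factorial (n+2) |>.trans' (by omega)
        have : t ^ (n + 2) / ((n + 2)! : ℝ) ≤ t ^ (n + 2) / 2 :=
          div_le_div_of_nonneg_left (by positivity) (by norm_num) h2
        refine this.trans_eq ?_
        ring
    _ = t ^ 2 / 2 * (1 - t)⁻¹ := by
        rw [tsum_mul_left, tsum_geometric_of_lt_one ht ht1]
    _ = t ^ 2 / (2 * (1 - t)) := by
        field_simp

/-- Bernstein's inequality: if `X_1, …, X_n` are independent, `|X_i| ≤ 1`,
`𝔼X_i = 0`, and `S = X_1 + ⋯ + X_n`, then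
`P(S ≥ x) ≤ exp(−x²/(2(𝔼S² + x)))` for every `x > 0`. -/
theorem bernstein_inequality {Ω : Type*} [MeasurableSpace Ω]
    (P : Measure Ω) [IsProbabilityMeasure P] {n : ℕ} (X : Fin n → Ω → ℝ)
    (hmeas : ∀ i, Measurable (X i))
    (hindep : iIndepFun X P)
    (hbdd : ∀ i ω, |X i ω| ≤ 1)
    (hmean : ∀ i, ∫ ω, X i ω ∂P = 0)
    (x : ℝ) (hx : 0 < x) :
    (P {ω | x ≤ ∑ i, X i ω}).toReal
      ≤ Real.exp (-x ^ 2 / (2 * ((∫ ω, (∑ i, X i ω) ^ 2 ∂P) + x))) := by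
  set σ2 : ℝ := ∫ ω, (∑ i, X i ω) ^ 2 ∂P with hσ2def
  -- basic integrability
  have hmemℒp : ∀ i, MemLp (X i) 2 P := fun i =>
    MemLp.of_bound ((hmeas i).aestronglyMeasurable) 1
      (Filter.Eventually.of_forall fun ω => by rw [Real.norm_eq_abs]; exact hbdd i ω)
  have hintX : ∀ i, Integrable (X i) P := fun i => (hmemℒp i).integrable one_le_two
  have hintX2 : ∀ i, Integrable (fun ω => X i ω ^ 2) P := fun i => by
    refine (integrable_const (1 : ℝ)).mono' ((hmeas i).pow_const 2).aestronglyMeasurable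
      (Filter.Eventually.of_forall fun ω => ?_)
    rw [Real.norm_eq_abs, abs_pow]
    calc |X i ω| ^ 2 ≤ 1 ^ 2 := pow_le_pow_left₀ (abs_nonneg _) (hbdd i ω) 2
      _ = 1 := one_pow 2
  -- σ2 ≥ 0 and σ2 = sum of E X_i^2
  have hσ2nonneg : 0 ≤ σ2 := integral_nonneg fun ω => sq_nonneg _
  have hσ2pos : 0 < σ2 + x := by linarith
  have hXi2nonneg : ∀ i, 0 ≤ ∫ ω, X i ω ^ 2 ∂P := fun i => integral_nonneg fun ω => sq_nonneg _
  have hσ2sum : σ2 = ∑ i, ∫ ω, X i ω ^ 2 ∂P := by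
    have hvar : variance (∑ i, X i) P = ∑ i, variance (X i) P :=
      IndepFun.variance_sum (fun i _ => hmemℒp i)
        (fun i _ j _ hij => hindep.indepFun hij)
    have hS0 : ∫ ω, (∑ i, X i) ω ∂P = 0 := by
      simp only [Finset.sum_apply]
      rw [integral_finset_sum _ fun i _ => hintX i]
      simp [hmean]
    have hvS : variance (∑ i, X i) P = σ2 := by
      rw [variance_eq_sub (memLp_finset_sum' _ fun i _ => hmemℒp i), hS0]
      simp only [Pi.pow_apply, Finset.sum_apply, hσ2def]
      ring
    have hvi : ∀ i, variance (X i) P = ∫ ω, X i ω ^ 2 ∂P := fun i => by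
      rw [variance_eq_sub (hmemℒp i), hmean i]
      simp
    rw [← hvS, hvar]
    exact Finset.sum_congr rfl fun i _ => hvi i
  -- the exponent parameter
  set t : ℝ := x / (σ2 + x) with htdef
  have ht0 : 0 < t := div_pos hx hσ2pos
  have ht1 : t ≤ 1 := by
    rw [htdef, div_le_one hσ2pos]; linarith
  set c : ℝ := Real.exp t - 1 - t with hcdef
  have hc0 : 0 ≤ c := by
    have := Real.add_one_le_exp t; simp only [hcdef]; linarith
  -- integrability of exp(t * X i)
  have hintExp : ∀ i, Integrable (fun ω => Real.exp (t * X i ω)) P := fun i => by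
    refine (integrable_const (Real.exp t)).mono'
      (((hmeas i).const_mul t).exp).aestronglyMeasurable
      (Filter.Eventually.of_forall fun ω => ?_)
    rw [Real.norm_eq_abs, abs_of_pos (Real.exp_pos _), Real.exp_le_exp]
    calc t * X i ω ≤ t * 1 := mul_le_mul_of_nonneg_left ((le_abs_self _).trans (hbdd i ω)) ht0.le
      _ = t := mul_one t
  -- per-variable mgf bound
  have hmgf : ∀ i, mgf (X i) P t ≤ Real.exp (c * ∫ ω, X i ω ^ 2 ∂P) := fun i => by
    have hA : Integrable (fun ω => 1 + t * X i ω) P :=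
      (integrable_const 1).add ((hintX i).const_mul t)
    have hB : Integrable (fun ω => X i ω ^ 2 * c) P := (hintX2 i).mul_const c
    have hint1 : Integrable (fun ω => 1 + t * X i ω + X i ω ^ 2 * c) P := hA.add hB
    calc mgf (X i) P t = ∫ ω, Real.exp (t * X i ω) ∂P := rfl
      _ ≤ ∫ ω, (1 + t * X i ω + X i ω ^ 2 * c) ∂P :=
          integral_mono (hintExp i) hint1 fun ω => exp_pointwise_bound ht0.le (hbdd i ω)
      _ = 1 + c * ∫ ω, X i ω ^ 2 ∂P := by
          rw [integral_add hA hB, integral_add (integrable_const 1) ((hintX i).const_mul t),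
            integral_const, integral_const_mul, integral_mul_const, hmean i]
          simp [mul_comm]
      _ ≤ Real.exp (c * ∫ ω, X i ω ^ 2 ∂P) := by
          have := Real.add_one_le_exp (c * ∫ ω, X i ω ^ 2 ∂P); linarith
  -- Chernoff
  have hSmeas : Measurable (∑ i, X i) := by
    rw [show (∑ i, X i) = fun ω => ∑ i, X i ω from funext fun ω => Finset.sum_apply ω _ _]
    exact Finset.measurable_sum _ fun i _ => hmeas i
  have hintExpS : Integrable (fun ω => Real.exp (t * (∑ i, X i) ω)) P := by
    refine (integrable_const (Real.exp (t * n))).mono'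
      ((hSmeas.const_mul t).exp.aestronglyMeasurable)
      (Filter.Eventually.of_forall fun ω => ?_)
    rw [Real.norm_eq_abs, abs_of_pos (Real.exp_pos _), Real.exp_le_exp]
    refine mul_le_mul_of_nonneg_left ?_ ht0.le
    simp only [Finset.sum_apply]
    calc ∑ i, X i ω ≤ ∑ i : Fin n, (1 : ℝ) :=
          Finset.sum_le_sum fun i _ => (le_abs_self _).trans (hbdd i ω)
      _ = n := by simp
  have chernoff := measure_ge_le_exp_mul_mgf (X := ∑ i, X i) (μ := P) (t := t) x ht0.le hintExpS
  have hsetEq : {ω | x ≤ ∑ i, X i ω} = {ω | x ≤ (∑ i, X i) ω} := by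
    simp only [Finset.sum_apply]
  rw [hsetEq]
  refine chernoff.trans ?_
  -- bound the product of mgfs
  have hprod : mgf (∑ i, X i) P t ≤ Real.exp (c * σ2) := by
    rw [hindep.mgf_sum hmeas]
    calc ∏ i, mgf (X i) P t ≤ ∏ i, Real.exp (c * ∫ ω, X i ω ^ 2 ∂P) :=
          Finset.prod_le_prod (fun i _ => mgf_nonneg) (fun i _ => hmgf i)
      _ = Real.exp (∑ i, c * ∫ ω, X i ω ^ 2 ∂P) := (Real.exp_sum _ _).symm
      _ = Real.exp (c * σ2) := by rw [hσ2sum, Finset.mul_sum]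
  calc Real.exp (-t * x) * mgf (∑ i, X i) P t
      ≤ Real.exp (-t * x) * Real.exp (c * σ2) := by
        exact mul_le_mul_of_nonneg_left hprod (Real.exp_pos _).le
    _ = Real.exp (-t * x + c * σ2) := (Real.exp_add _ _).symm
    _ ≤ Real.exp (-x ^ 2 / (2 * (σ2 + x))) := by
        rw [Real.exp_le_exp]
        have htx : t * x = x ^ 2 / (σ2 + x) := by
          rw [htdef]; field_simp
        rcases eq_or_lt_of_le hσ2nonneg with h0 | hσ2p
        · have ht1' : t = 1 := by rw [htdef, ← h0]; field_simp; ring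
          rw [← h0]
          have hhalf : x ^ 2 / (2 * (0 + x)) = x / 2 := by field_simp; ring
          rw [ht1', mul_zero, add_zero, neg_div, hhalf]
          linarith
        · have htlt1 : t < 1 := by
            rw [htdef, div_lt_one hσ2pos]; linarith
          have hcle : c ≤ t ^ 2 / (2 * (1 - t)) := exp_sub_one_sub_le ht0.le htlt1
          have h1t : 1 - t = σ2 / (σ2 + x) := by
            rw [htdef]; field_simp; ring
          have hσ2c : σ2 * c ≤ x ^ 2 / (2 * (σ2 + x)) := by
            have h := mul_le_mul_of_nonneg_left hcle hσ2nonneg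
            refine h.trans_eq ?_
            rw [htdef, h1t]
            field_simp
          have heq : x ^ 2 / (σ2 + x) = 2 * (x ^ 2 / (2 * (σ2 + x))) := by
            field_simp
          have hneg : -x ^ 2 / (2 * (σ2 + x)) = -(x ^ 2 / (2 * (σ2 + x))) := neg_div _ _
          rw [hneg]
          nlinarith [htx, hσ2c, heq]
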